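/- arXiv:1003.0017 — 2 statements merged into one kernel-verified Lean document; each statement's English description precedes it below -/
import Mathlib

section
/- Suppose the integer k ≥ 0 satisfies ν := k − n/2 + 1 ≤ −3/2 (equivalently 2k ≤ n − 5). Then the consecutive-generation ratio diverges quadratically at the origin: z² · γ_k(z) → 2(k+1)(n − 2k − 4)/B as z → 0⁺; that is, γ_k(z) ∼ 4(ν + n/2)(−ν − 1)/(Bz²) since ν + n/2 = k+1 and −ν−1 = (n − 2k − 4)/2. -/
open Real MeasureTheory Set Filter Topology

/-- The steady-state generation-`k` density in the normalized distance
`z = |x|√(λ/D)` from the origin: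
`𝒜_k(z) = (μ(λB)^k/(k!(4πD)^{n/2})) ∫₀^∞ s^{k−n/2} exp(−λs − z²/(4λs)) ds`. -/
noncomputable def steadyDensity (n : ℕ) (lam D B mu : ℝ) (k : ℕ) (z : ℝ) : ℝ :=
  (mu * (lam * B) ^ k / ((Nat.factorial k : ℝ) * (4 * π * D) ^ ((n : ℝ) / 2))) *
    ∫ s in Set.Ioi (0:ℝ),
      s ^ ((k : ℝ) - (n : ℝ) / 2) * Real.exp (-lam * s - z ^ 2 / (4 * lam * s))

lemma subst_inv (C : ℝ) (hC : 0 < C) (g : ℝ → ℝ) :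
    ∫ s in Set.Ioi (0:ℝ), g s = ∫ t in Set.Ioi (0:ℝ), (C / t ^ 2) * g (C / t) := by
  have himg : (fun t : ℝ => C / t) '' Set.Ioi 0 = Set.Ioi 0 := by
    ext y
    constructor
    · rintro ⟨t, ht, rfl⟩
      exact div_pos hC ht
    · intro hy
      exact ⟨C / y, div_pos hC hy, by field_simp⟩
  have hderiv : ∀ t ∈ Set.Ioi (0:ℝ),
      HasDerivWithinAt (fun t : ℝ => C / t) (-(C / t ^ 2)) (Set.Ioi 0) t := by
    intro t ht
    have h1 : HasDerivAt (fun t : ℝ => C / t) (-(C / t ^ 2)) t := by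
      simpa [div_eq_mul_inv, mul_comm, neg_div] using
        ((hasDerivAt_inv (ne_of_gt ht)).const_mul C)
    exact h1.hasDerivWithinAt
  have hinj : Set.InjOn (fun t : ℝ => C / t) (Set.Ioi 0) := by
    intro a ha b hb hab
    have ha' : (0:ℝ) < a := ha
    have hb' : (0:ℝ) < b := hb
    have h : C / a = C / b := hab
    rw [div_eq_div_iff ha'.ne' hb'.ne'] at h
    exact (mul_left_cancel₀ hC.ne' h).symm
  have := MeasureTheory.integral_image_eq_integral_abs_deriv_smul measurableSet_Ioi hderiv hinj g
  rw [himg] at this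
  rw [this]
  refine setIntegral_congr_fun measurableSet_Ioi fun t ht => ?_
  have ht' : (0:ℝ) < t := ht
  rw [abs_neg, abs_of_pos (div_pos hC (pow_pos ht' 2)), smul_eq_mul]

noncomputable def Faux (b z : ℝ) : ℝ :=
  ∫ t in Set.Ioi (0:ℝ), t ^ b * Real.exp (-t - z ^ 2 / (4 * t))

lemma Faux_meas (b z : ℝ) : AEStronglyMeasurable
    (fun t : ℝ => t ^ b * Real.exp (-t - z ^ 2 / (4 * t)))
    (volume.restrict (Set.Ioi 0)) := by
  apply Measurable.aestronglyMeasurable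
  fun_prop

lemma Faux_tendsto (b : ℝ) (hb : -1 < b) :
    Tendsto (fun z => Faux b z) (𝓝[>] (0:ℝ)) (𝓝 (Real.Gamma (b + 1))) := by
  have hΓ : Real.Gamma (b + 1) = ∫ t in Set.Ioi (0:ℝ), t ^ b * Real.exp (-t) := by
    rw [Real.Gamma_eq_integral (by linarith)]
    refine setIntegral_congr_fun measurableSet_Ioi fun t ht => ?_
    rw [add_sub_cancel_right]; ring
  rw [hΓ]
  apply tendsto_integral_filter_of_dominated_convergence
      (fun t => t ^ b * Real.exp (-t))
  · exact Eventually.of_forall fun z => Faux_meas b z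
  · refine Eventually.of_forall fun z => ?_
    filter_upwards [ae_restrict_mem measurableSet_Ioi] with t ht
    have ht' : (0:ℝ) < t := ht
    rw [Real.norm_eq_abs, abs_of_nonneg (by positivity)]
    have hle : Real.exp (-t - z ^ 2 / (4 * t)) ≤ Real.exp (-t) := by
      apply Real.exp_le_exp.2
      have : 0 ≤ z ^ 2 / (4 * t) := by positivity
      linarith
    exact mul_le_mul_of_nonneg_left hle (Real.rpow_nonneg ht'.le b)
  · have h := Real.GammaIntegral_convergent (show 0 < b + 1 by linarith)
    refine h.congr_fun (fun t ht => ?_) measurableSet_Ioi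
    rw [add_sub_cancel_right]; ring
  · filter_upwards [ae_restrict_mem measurableSet_Ioi] with t ht
    have ht' : (0:ℝ) < t := ht
    have hc : ContinuousAt (fun z : ℝ => t ^ b * Real.exp (-t - z ^ 2 / (4 * t))) 0 := by
      fun_prop
    have h0 : t ^ b * Real.exp (-t - (0:ℝ) ^ 2 / (4 * t)) = t ^ b * Real.exp (-t) := by
      norm_num
    exact h0 ▸ hc.tendsto.mono_left nhdsWithin_le_nhds

/-- The consecutive-generation ratio `γ_k(z) = 𝒜_k(z)/𝒜_{k+1}(z)`. -/
noncomputable def genRatio (n : ℕ) (lam D B mu : ℝ) (k : ℕ) (z : ℝ) : ℝ :=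
  steadyDensity n lam D B mu k z / steadyDensity n lam D B mu (k + 1) z

lemma integral_eq_Faux (lam z e : ℝ) (hlam : 0 < lam) (hz : 0 < z) :
    (∫ s in Set.Ioi (0:ℝ), s ^ e * Real.exp (-lam * s - z ^ 2 / (4 * lam * s))) =
      (z ^ 2 / (4 * lam)) ^ (1 + e) * Faux (-e - 2) z := by
  set C : ℝ := z ^ 2 / (4 * lam) with hCdef
  have hC : 0 < C := by positivity
  rw [subst_inv C hC (fun s => s ^ e * Real.exp (-lam * s - z ^ 2 / (4 * lam * s)))]
  have hcong : ∀ t ∈ Set.Ioi (0:ℝ),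
      C / t ^ 2 * ((C / t) ^ e * Real.exp (-lam * (C / t) - z ^ 2 / (4 * lam * (C / t)))) =
      C ^ (1 + e) * (t ^ (-e - 2) * Real.exp (-t - z ^ 2 / (4 * t))) := by
    intro t ht
    have ht' : (0:ℝ) < t := ht
    have hexp : -lam * (C / t) - z ^ 2 / (4 * lam * (C / t)) = -t - z ^ 2 / (4 * t) := by
      rw [hCdef]
      field_simp
      ring
    rw [hexp, Real.div_rpow hC.le ht'.le,
      show (1 : ℝ) + e = 1 + e from rfl, Real.rpow_add hC, Real.rpow_one,
      show -e - 2 = (-e) + (-(2:ℝ)) by ring, Real.rpow_add ht',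
      Real.rpow_neg ht'.le e, Real.rpow_neg ht'.le 2,
      show ((2:ℝ)) = ((2:ℕ):ℝ) by norm_num, Real.rpow_natCast]
    have h1 : t ^ e ≠ 0 := (Real.rpow_pos_of_pos ht' e).ne'
    field_simp
  rw [setIntegral_congr_fun measurableSet_Ioi hcong, integral_const_mul]
  rfl

/-- If `ν = k − n/2 + 1 ≤ −3/2` (i.e. `2k ≤ n − 5`), the consecutive-generation
ratio diverges quadratically at the origin:
`z² γ_k(z) → 2(k+1)(n − 2k − 4)/B` as `z → 0⁺`. -/
theorem genRatio_quadratic_divergence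
    (n : ℕ) (hn : 5 ≤ n) (lam D B mu : ℝ)
    (hlam : 0 < lam) (hD : 0 < D) (hB : 0 < B) (hmu : 0 < mu)
    (k : ℕ) (hnu : (k : ℝ) - (n : ℝ) / 2 + 1 ≤ -(3 / 2 : ℝ)) :
    Filter.Tendsto (fun z : ℝ => z ^ 2 * genRatio n lam D B mu k z)
      (nhdsWithin 0 (Set.Ioi 0))
      (nhds (2 * ((k : ℝ) + 1) * ((n : ℝ) - 2 * (k : ℝ) - 4) / B)) := by
  set e : ℝ := (k : ℝ) - (n : ℝ) / 2 with he
  set b : ℝ := -e - 2 with hbdef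
  have hb : (1:ℝ)/2 ≤ b := by rw [hbdef, he]; linarith
  have hb0 : (0:ℝ) < b := by linarith
  have hP : (0:ℝ) < (4 * π * D) ^ ((n : ℝ) / 2) :=
    Real.rpow_pos_of_pos (by positivity) _
  -- eventual equality
  have heq : ∀ z ∈ Set.Ioi (0:ℝ), z ^ 2 * genRatio n lam D B mu k z =
      (4 * ((k:ℝ) + 1) / B) * (Faux b z / Faux (b - 1) z) := by
    intro z hz
    have hz' : (0:ℝ) < z := hz
    set C : ℝ := z ^ 2 / (4 * lam) with hCdef
    have hC : 0 < C := by positivity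
    have h1 : steadyDensity n lam D B mu k z =
        (mu * (lam * B) ^ k / ((Nat.factorial k : ℝ) * (4 * π * D) ^ ((n : ℝ) / 2))) *
          (C ^ (1 + e) * Faux b z) := by
      rw [steadyDensity, integral_eq_Faux lam z e hlam hz', hbdef]
    have hcast : ((k + 1 : ℕ) : ℝ) - (n : ℝ) / 2 = e + 1 := by push_cast; rw [he]; ring
    have h2 : steadyDensity n lam D B mu (k + 1) z =
        (mu * (lam * B) ^ (k + 1) /
            ((Nat.factorial (k + 1) : ℝ) * (4 * π * D) ^ ((n : ℝ) / 2))) *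
          ((C ^ (1 + e) * C) * Faux (b - 1) z) := by
      rw [steadyDensity, hcast, integral_eq_Faux lam z (e + 1) hlam hz',
        show -(e + 1) - 2 = b - 1 by rw [hbdef]; ring,
        show (1 : ℝ) + (e + 1) = (1 + e) + 1 by ring,
        Real.rpow_add hC, Real.rpow_one]
    rw [genRatio, h1, h2, ← mul_assoc, ← mul_assoc, mul_div_mul_comm, ← mul_assoc]
    congr 1
    have hz2 : z ^ 2 = 4 * lam * C := by rw [hCdef]; field_simp
    have hpow : C ^ ((1:ℝ) + e) ≠ 0 := (Real.rpow_pos_of_pos hC _).ne'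
    have hfac : (Nat.factorial (k + 1) : ℝ) = ((k:ℝ) + 1) * (Nat.factorial k : ℝ) := by
      rw [Nat.factorial_succ]; push_cast; ring
    rw [hz2, hfac]
    have hfk : (Nat.factorial k : ℝ) ≠ 0 := Nat.cast_ne_zero.2 (Nat.factorial_ne_zero k)
    have hk1 : ((k:ℝ) + 1) ≠ 0 := by positivity
    field_simp
    ring
  -- limit of the model function
  have hF1 : Tendsto (fun z => Faux b z) (𝓝[>] (0:ℝ)) (𝓝 (Real.Gamma (b + 1))) :=
    Faux_tendsto b (by linarith)
  have hF2 : Tendsto (fun z => Faux (b - 1) z) (𝓝[>] (0:ℝ)) (𝓝 (Real.Gamma b)) := by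
    have := Faux_tendsto (b - 1) (by linarith)
    rwa [sub_add_cancel] at this
  have hΓpos : (0:ℝ) < Real.Gamma b := Real.Gamma_pos_of_pos hb0
  have hlim : Tendsto (fun z => (4 * ((k:ℝ) + 1) / B) * (Faux b z / Faux (b - 1) z))
      (𝓝[>] (0:ℝ))
      (𝓝 ((4 * ((k:ℝ) + 1) / B) * (Real.Gamma (b + 1) / Real.Gamma b))) :=
    tendsto_const_nhds.mul (hF1.div hF2 hΓpos.ne')
  have hval : (4 * ((k:ℝ) + 1) / B) * (Real.Gamma (b + 1) / Real.Gamma b) =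
      2 * ((k : ℝ) + 1) * ((n : ℝ) - 2 * (k : ℝ) - 4) / B := by
    rw [Real.Gamma_add_one hb0.ne', mul_div_assoc b, div_self hΓpos.ne', mul_one,
      hbdef, he]
    field_simp
    ring
  rw [← hval]
  refine hlim.congr' ?_
  filter_upwards [self_mem_nhdsWithin] with z hz
  exact (heq z hz).symm
end

section
/- Suppose the integer k ≥ 0 satisfies ν := k − n/2 + 1 > 0. Then for every z > 0 the consecutive-generation ratio satisfies the strict bound γ_k(z) < 2(k+1)/(Bz); equivalently, B · z · 𝒜_k(z) < 2(k+1) · 𝒜_{k+1}(z). -/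
open Real MeasureTheory Set Filter Topology

private lemma aux_integrable (lam w β : ℝ) (hlam : 0 < lam) (hw : 0 < w) :
    IntegrableOn (fun s : ℝ => s ^ β * Real.exp (-lam * s - w / s)) (Set.Ioi 0) := by
  obtain ⟨m, hm⟩ := exists_nat_gt (-β)
  have hmaj : IntegrableOn
      (fun s : ℝ => ((Nat.factorial m : ℝ) / w ^ m) * (s ^ (β + (m:ℝ)) * Real.exp (-lam * s)))
      (Set.Ioi 0) := by
    have h := integrableOn_rpow_mul_exp_neg_mul_rpow (p := 1) (s := β + (m:ℝ)) (b := lam)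
      (by linarith) zero_lt_one hlam
    exact (h.congr_fun (fun x hx => by rw [Real.rpow_one]) measurableSet_Ioi).const_mul _
  have hcont : ContinuousOn (fun s : ℝ => s ^ β * Real.exp (-lam * s - w / s)) (Set.Ioi 0) := by
    apply ContinuousOn.mul
    · exact fun x hx => (Real.continuousAt_rpow_const x β (Or.inl (ne_of_gt hx))).continuousWithinAt
    · apply Real.continuous_exp.comp_continuousOn
      exact ((continuous_const.mul continuous_id).continuousOn).sub
        (continuousOn_const.div continuousOn_id fun x hx => ne_of_gt hx)
  refine hmaj.integrable.mono (hcont.aestronglyMeasurable measurableSet_Ioi) ?_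
  rw [ae_restrict_iff' measurableSet_Ioi]
  filter_upwards with x hx
  have hx0 : (0:ℝ) < x := hx
  have hb : Real.exp (-lam * x - w / x)
      ≤ Real.exp (-lam * x) * ((Nat.factorial m : ℝ) * x ^ m / w ^ m) := by
    have h2 : (w / x) ^ m / (Nat.factorial m : ℝ) ≤ Real.exp (w / x) :=
      Real.pow_div_factorial_le_exp (x := w / x) (div_nonneg hw.le hx0.le) m
    have hprod : ((w / x) ^ m / (Nat.factorial m : ℝ))
        * ((Nat.factorial m : ℝ) * x ^ m / w ^ m) = 1 := by
      have hf : (Nat.factorial m : ℝ) ≠ 0 := Nat.cast_ne_zero.mpr (Nat.factorial_ne_zero m)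
      field_simp [div_pow]
      rw [← mul_pow, div_mul_cancel₀ w hx0.ne']
    have harg : -lam * x - w / x + w / x = -lam * x := by ring
    calc Real.exp (-lam * x - w / x)
        = (Real.exp (-lam * x - w / x) * ((w / x) ^ m / (Nat.factorial m : ℝ)))
            * ((Nat.factorial m : ℝ) * x ^ m / w ^ m) := by rw [mul_assoc, hprod, mul_one]
      _ ≤ (Real.exp (-lam * x - w / x) * Real.exp (w / x))
            * ((Nat.factorial m : ℝ) * x ^ m / w ^ m) := by
          apply mul_le_mul_of_nonneg_right _ (by positivity)
          exact mul_le_mul_of_nonneg_left h2 (Real.exp_pos _).le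
      _ = Real.exp (-lam * x) * ((Nat.factorial m : ℝ) * x ^ m / w ^ m) := by
          rw [← Real.exp_add, harg]
  rw [Real.norm_eq_abs, Real.norm_eq_abs, abs_of_nonneg (by positivity),
    abs_of_nonneg (by positivity)]
  calc x ^ β * Real.exp (-lam * x - w / x)
      ≤ x ^ β * (Real.exp (-lam * x) * ((Nat.factorial m : ℝ) * x ^ m / w ^ m)) := by
        exact mul_le_mul_of_nonneg_left hb (by positivity)
    _ = (Nat.factorial m : ℝ) / w ^ m * (x ^ (β + (m:ℝ)) * Real.exp (-lam * x)) := by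
        rw [Real.rpow_add hx0, Real.rpow_natCast]; ring

lemma aux_pos (lam w β : ℝ) (hlam : 0 < lam) (hw : 0 < w) :
    0 < ∫ s in Set.Ioi (0:ℝ), s ^ β * Real.exp (-lam * s - w / s) := by
  rw [setIntegral_pos_iff_support_of_nonneg_ae ?_ (aux_integrable lam w β hlam hw)]
  · refine lt_of_lt_of_le ?_ (measure_mono (?_ : Set.Ioi (1:ℝ) ⊆ _))
    · rw [Real.volume_Ioi]; exact ENNReal.zero_lt_top
    · intro x hx
      have hx0 : (0:ℝ) < x := lt_trans one_pos hx
      exact ⟨ne_of_gt (by positivity), hx0⟩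
  · refine Filter.eventually_of_mem (self_mem_ae_restrict measurableSet_Ioi) fun x hx => ?_
    have hx0 : (0:ℝ) < x := hx
    positivity
lemma aux_key (lam z a : ℝ) (hlam : 0 < lam) (hz : 0 < z) (ha : 0 < a + 1) :
    z * ∫ s in Set.Ioi (0:ℝ), s ^ a * Real.exp (-lam * s - z ^ 2 / (4 * lam * s))
      < 2 * lam * ∫ s in Set.Ioi (0:ℝ),
          s ^ (a + 1) * Real.exp (-lam * s - z ^ 2 / (4 * lam * s)) := by
  set w : ℝ := z ^ 2 / (4 * lam) with hw_def
  have hw : 0 < w := by positivity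
  set c : ℝ := z / (2 * lam) with hc_def
  have hc : 0 < c := by positivity
  have hzc : z = 2 * lam * c := by rw [hc_def]; field_simp
  have hwc : w = lam * c ^ 2 := by rw [hw_def, hc_def]; field_simp; ring
  -- rewrite the integrands using w
  have heq : ∀ t : ℝ, (fun s : ℝ => s ^ t * Real.exp (-lam * s - z ^ 2 / (4 * lam * s)))
      = fun s : ℝ => s ^ t * Real.exp (-lam * s - w / s) := by
    intro t; funext s; rw [hw_def, div_div]
  rw [heq a, heq (a + 1)]
  have hint : ∀ β : ℝ, IntegrableOn
      (fun s : ℝ => s ^ β * Real.exp (-lam * s - w / s)) (Set.Ioi 0) :=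
    fun β => aux_integrable lam w β hlam hw
  -- F and G
  set F : ℝ → ℝ := fun s =>
    2 * lam * (s ^ (a + 1) * Real.exp (-lam * s - w / s))
      - z * (s ^ a * Real.exp (-lam * s - w / s)) with hF_def
  set G : ℝ → ℝ := fun s =>
    2 * lam * c ^ (2 * a + 4) * (s ^ (-a - 3) * Real.exp (-lam * s - w / s))
      - 2 * lam * c ^ (2 * a + 3) * (s ^ (-a - 2) * Real.exp (-lam * s - w / s)) with hG_def
  have hFint : IntegrableOn F (Set.Ioi 0) := ((hint (a + 1)).const_mul _).sub ((hint a).const_mul _)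
  have hGint : IntegrableOn G (Set.Ioi 0) :=
    ((hint (-a - 3)).const_mul _).sub ((hint (-a - 2)).const_mul _)
  -- power helpers
  have hc2 : ∀ t : ℝ, ((c ^ 2 : ℝ)) ^ t = c ^ (2 * t) := by
    intro t
    rw [← Real.rpow_natCast c 2, ← Real.rpow_mul hc.le]
    norm_num
  -- the substitution x ↦ c^2 * x⁻¹
  have hmap : (fun x : ℝ => c ^ 2 * x⁻¹) '' Set.Ioi 0 = Set.Ioi 0 := by
    ext y
    simp only [Set.mem_image, Set.mem_Ioi]
    constructor
    · rintro ⟨x, hx, rfl⟩; positivity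
    · intro hy
      refine ⟨c ^ 2 * y⁻¹, by positivity, ?_⟩
      field_simp
  have hderiv : ∀ x ∈ Set.Ioi (0:ℝ),
      HasDerivWithinAt (fun x : ℝ => c ^ 2 * x⁻¹) (c ^ 2 * -(x ^ 2)⁻¹) (Set.Ioi 0) x :=
    fun x hx => ((hasDerivAt_inv (ne_of_gt hx)).const_mul (c ^ 2)).hasDerivWithinAt
  have hinj : Set.InjOn (fun x : ℝ => c ^ 2 * x⁻¹) (Set.Ioi 0) := by
    intro x hx y hy hxy
    have h2 : x⁻¹ = y⁻¹ := mul_left_cancel₀ (by positivity) hxy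
    exact inv_injective h2
  have hchange : ∫ x in Set.Ioi (0:ℝ), F x
      = ∫ x in Set.Ioi (0:ℝ), |c ^ 2 * -(x ^ 2)⁻¹| • F (c ^ 2 * x⁻¹) := by
    conv_lhs => rw [← hmap]
    exact integral_image_eq_integral_abs_deriv_smul measurableSet_Ioi hderiv hinj F
  -- exponential symmetry
  have hgsym : ∀ x : ℝ, 0 < x →
      Real.exp (-lam * (c ^ 2 * x⁻¹) - w / (c ^ 2 * x⁻¹)) = Real.exp (-lam * x - w / x) := by
    intro x hx
    congr 1
    rw [hwc]
    field_simp
    ring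
  have hGeq : ∫ x in Set.Ioi (0:ℝ), |c ^ 2 * -(x ^ 2)⁻¹| • F (c ^ 2 * x⁻¹)
      = ∫ x in Set.Ioi (0:ℝ), G x := by
    refine setIntegral_congr_fun measurableSet_Ioi fun x hx => ?_
    have hx0 : (0:ℝ) < x := hx
    have hxa : (0:ℝ) < x ^ a := Real.rpow_pos_of_pos hx0 a
    have hca : (0:ℝ) < c ^ (2 * a) := Real.rpow_pos_of_pos hc _
    have habs : |c ^ 2 * -(x ^ 2)⁻¹| = c ^ 2 * (x ^ 2)⁻¹ := by
      rw [abs_of_nonpos (by nlinarith [sq_nonneg c, sq_nonneg x, inv_pos.mpr (pow_pos hx0 2)])]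
      ring
    have hrp : ∀ t : ℝ, (c ^ 2 * x⁻¹) ^ t = c ^ (2 * t) * (x ^ t)⁻¹ := by
      intro t
      rw [Real.mul_rpow (by positivity) (by positivity), Real.inv_rpow hx0.le, hc2]
    have hxa1 : x ^ (a + 1) = x ^ a * x := by rw [Real.rpow_add hx0, Real.rpow_one]
    have hxm3 : x ^ (-a - 3) = (x ^ a * x ^ 3)⁻¹ := by
      rw [show -a - 3 = -(a + (3:ℕ)) by push_cast; ring, Real.rpow_neg hx0.le,
        Real.rpow_add hx0, Real.rpow_natCast]
    have hxm2 : x ^ (-a - 2) = (x ^ a * x ^ 2)⁻¹ := by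
      rw [show -a - 2 = -(a + (2:ℕ)) by push_cast; ring, Real.rpow_neg hx0.le,
        Real.rpow_add hx0, Real.rpow_natCast]
    have hc4 : c ^ (2 * a + 4) = c ^ (2 * a) * c ^ 4 := by
      rw [show 2 * a + 4 = 2 * a + ((4:ℕ):ℝ) by push_cast; ring, Real.rpow_add hc,
        Real.rpow_natCast]
    have hc3 : c ^ (2 * a + 3) = c ^ (2 * a) * c ^ 3 := by
      rw [show 2 * a + 3 = 2 * a + ((3:ℕ):ℝ) by push_cast; ring, Real.rpow_add hc,
        Real.rpow_natCast]
    have hc21 : c ^ (2 * (a + 1)) = c ^ (2 * a) * c ^ 2 := by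
      rw [show 2 * (a + 1) = 2 * a + ((2:ℕ):ℝ) by push_cast; ring, Real.rpow_add hc,
        Real.rpow_natCast]
    rw [smul_eq_mul, habs, hF_def, hG_def]
    simp only
    rw [hgsym x hx0, hrp a, hrp (a + 1), hxa1, hxm3, hxm2, hc4, hc3, hc21, hzc]
    field_simp
  -- pointwise identity for F + G
  have hFG : ∀ x : ℝ, 0 < x → F x + G x
      = 2 * lam * ((x - c) * ((x ^ a) ^ 2 * x ^ 3 - c ^ (2 * a) * c ^ 3))
          * Real.exp (-lam * x - w / x) / (x ^ a * x ^ 3) := by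
    intro x hx0
    have hxa : (0:ℝ) < x ^ a := Real.rpow_pos_of_pos hx0 a
    have hxa1 : x ^ (a + 1) = x ^ a * x := by rw [Real.rpow_add hx0, Real.rpow_one]
    have hxm3 : x ^ (-a - 3) = (x ^ a * x ^ 3)⁻¹ := by
      rw [show -a - 3 = -(a + (3:ℕ)) by push_cast; ring, Real.rpow_neg hx0.le,
        Real.rpow_add hx0, Real.rpow_natCast]
    have hxm2 : x ^ (-a - 2) = (x ^ a * x ^ 2)⁻¹ := by
      rw [show -a - 2 = -(a + (2:ℕ)) by push_cast; ring, Real.rpow_neg hx0.le,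
        Real.rpow_add hx0, Real.rpow_natCast]
    have hc4 : c ^ (2 * a + 4) = c ^ (2 * a) * c ^ 4 := by
      rw [show 2 * a + 4 = 2 * a + ((4:ℕ):ℝ) by push_cast; ring, Real.rpow_add hc,
        Real.rpow_natCast]
    have hc3 : c ^ (2 * a + 3) = c ^ (2 * a) * c ^ 3 := by
      rw [show 2 * a + 3 = 2 * a + ((3:ℕ):ℝ) by push_cast; ring, Real.rpow_add hc,
        Real.rpow_natCast]
    have hcaa : c ^ (2 * a) = c ^ a * c ^ a := by
      rw [show 2 * a = a + a by ring, Real.rpow_add hc]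
    rw [hF_def, hG_def]
    simp only
    rw [hxa1, hxm3, hxm2, hc4, hc3, hzc, hcaa]
    field_simp
    ring
  -- monotonicity of rpow gives the sign
  have hsign : ∀ x : ℝ, 0 < x →
      0 ≤ (x - c) * ((x ^ a) ^ 2 * x ^ 3 - c ^ (2 * a) * c ^ 3) := by
    intro x hx0
    have hx23 : (x ^ a) ^ 2 * x ^ 3 = x ^ (2 * a + 3) := by
      rw [show 2 * a + 3 = a + a + ((3:ℕ):ℝ) by push_cast; ring, Real.rpow_add hx0,
        Real.rpow_add hx0, Real.rpow_natCast, sq]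
    have hc23 : c ^ (2 * a) * c ^ 3 = c ^ (2 * a + 3) := by
      rw [show 2 * a + 3 = 2 * a + ((3:ℕ):ℝ) by push_cast; ring, Real.rpow_add hc,
        Real.rpow_natCast]
    rw [hx23, hc23]
    rcases le_total c x with h | h
    · exact mul_nonneg (by linarith) (sub_nonneg.mpr (Real.rpow_le_rpow hc.le h (by linarith)))
    · have hle := Real.rpow_le_rpow hx0.le h (by linarith : (0:ℝ) ≤ 2 * a + 3)
      nlinarith
  have hsign' : ∀ x : ℝ, c < x →
      0 < (x - c) * ((x ^ a) ^ 2 * x ^ 3 - c ^ (2 * a) * c ^ 3) := by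
    intro x hx
    have hx0 : (0:ℝ) < x := lt_trans hc hx
    have hx23 : (x ^ a) ^ 2 * x ^ 3 = x ^ (2 * a + 3) := by
      rw [show 2 * a + 3 = a + a + ((3:ℕ):ℝ) by push_cast; ring, Real.rpow_add hx0,
        Real.rpow_add hx0, Real.rpow_natCast, sq]
    have hc23 : c ^ (2 * a) * c ^ 3 = c ^ (2 * a + 3) := by
      rw [show 2 * a + 3 = 2 * a + ((3:ℕ):ℝ) by push_cast; ring, Real.rpow_add hc,
        Real.rpow_natCast]
    rw [hx23, hc23]
    exact mul_pos (by linarith) (sub_pos.mpr (Real.rpow_lt_rpow hc.le hx (by linarith)))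
  -- positivity of ∫ (F + G)
  have hsum_int : IntegrableOn (fun x => F x + G x) (Set.Ioi (0:ℝ)) := hFint.add hGint
  have hposFG : 0 < ∫ x in Set.Ioi (0:ℝ), (F x + G x) := by
    rw [setIntegral_pos_iff_support_of_nonneg_ae ?_ hsum_int]
    · refine lt_of_lt_of_le ?_ (measure_mono (?_ : Set.Ioi c ⊆ _))
      · rw [Real.volume_Ioi]; exact ENNReal.zero_lt_top
      · intro x hx
        have hx0 : (0:ℝ) < x := lt_trans hc hx
        constructor
        · apply ne_of_gt
          show (0:ℝ) < F x + G x
          rw [hFG x hx0]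
          have := hsign' x hx
          positivity
        · exact hx0
    · refine Filter.eventually_of_mem (self_mem_ae_restrict measurableSet_Ioi) fun x hx => ?_
      have hx0 : (0:ℝ) < x := hx
      show (0:ℝ) ≤ F x + G x
      rw [hFG x hx0]
      have := hsign x hx0
      positivity
  have hFeqG : ∫ x in Set.Ioi (0:ℝ), F x = ∫ x in Set.Ioi (0:ℝ), G x := hchange.trans hGeq
  have hsum : ∫ x in Set.Ioi (0:ℝ), (F x + G x)
      = (∫ x in Set.Ioi (0:ℝ), F x) + ∫ x in Set.Ioi (0:ℝ), G x := integral_add hFint hGint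
  have hFpos : 0 < ∫ x in Set.Ioi (0:ℝ), F x := by
    rw [hsum, ← hFeqG] at hposFG
    linarith
  have hFval : ∫ x in Set.Ioi (0:ℝ), F x
      = 2 * lam * (∫ s in Set.Ioi (0:ℝ), s ^ (a + 1) * Real.exp (-lam * s - w / s))
        - z * ∫ s in Set.Ioi (0:ℝ), s ^ a * Real.exp (-lam * s - w / s) := by
    rw [hF_def]
    rw [integral_sub ((hint (a + 1)).const_mul _) ((hint a).const_mul _),
      integral_const_mul, integral_const_mul]
  linarith [hFval ▸ hFpos]

/-- If `ν = k − n/2 + 1 > 0`, then for every `z > 0`: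
`γ_k(z) < 2(k+1)/(Bz)`; equivalently `B z 𝒜_k(z) < 2(k+1) 𝒜_{k+1}(z)`. -/
theorem genRatio_strict_bound
    (n : ℕ) (hn : 1 ≤ n) (lam D B mu : ℝ)
    (hlam : 0 < lam) (hD : 0 < D) (hB : 0 < B) (hmu : 0 < mu)
    (k : ℕ) (hnu : 0 < (k : ℝ) - (n : ℝ) / 2 + 1) (z : ℝ) (hz : 0 < z) :
    genRatio n lam D B mu k z < 2 * ((k : ℝ) + 1) / (B * z) ∧
    B * z * steadyDensity n lam D B mu k z <
      2 * ((k : ℝ) + 1) * steadyDensity n lam D B mu (k + 1) z := by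
  have hpi : (0:ℝ) < π := Real.pi_pos
  have hP : (0:ℝ) < (4 * π * D) ^ ((n : ℝ) / 2) := Real.rpow_pos_of_pos (by positivity) _
  have hfac : (0:ℝ) < (Nat.factorial k : ℝ) := by exact_mod_cast k.factorial_pos
  have hfac1 : (0:ℝ) < (Nat.factorial (k+1) : ℝ) := by exact_mod_cast (k+1).factorial_pos
  have hw : (0:ℝ) < z ^ 2 / (4 * lam) := by positivity
  have hpos : ∀ β : ℝ,
      0 < ∫ s in Set.Ioi (0:ℝ), s ^ β * Real.exp (-lam * s - z ^ 2 / (4 * lam * s)) := by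
    intro β
    have h := aux_pos lam (z ^ 2 / (4 * lam)) β hlam hw
    have he : (fun s : ℝ => s ^ β * Real.exp (-lam * s - z ^ 2 / (4 * lam) / s))
        = fun s : ℝ => s ^ β * Real.exp (-lam * s - z ^ 2 / (4 * lam * s)) := by
      funext s; rw [div_div]
    rwa [he] at h
  have key := aux_key lam z ((k:ℝ) - (n:ℝ)/2) hlam hz hnu
  have hexp : ((k+1 : ℕ) : ℝ) - (n:ℝ)/2 = ((k:ℝ) - (n:ℝ)/2) + 1 := by push_cast; ring
  have hA1pos : 0 < steadyDensity n lam D B mu k z := by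
    rw [steadyDensity]
    exact mul_pos (div_pos (by positivity) (mul_pos hfac hP)) (hpos _)
  have hA2pos : 0 < steadyDensity n lam D B mu (k+1) z := by
    rw [steadyDensity]
    exact mul_pos (div_pos (by positivity) (mul_pos hfac1 hP)) (hpos _)
  have main : B * z * steadyDensity n lam D B mu k z <
      2 * ((k : ℝ) + 1) * steadyDensity n lam D B mu (k + 1) z := by
    simp only [steadyDensity]
    rw [hexp]
    have hcoef : mu * (lam * B) ^ (k+1) /
          ((Nat.factorial (k+1) : ℝ) * (4 * π * D) ^ ((n : ℝ) / 2))
        = (mu * (lam * B) ^ k / ((Nat.factorial k : ℝ) * (4 * π * D) ^ ((n : ℝ) / 2)))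
            * ((lam * B) / ((k:ℝ) + 1)) := by
      rw [pow_succ, Nat.factorial_succ]
      push_cast
      field_simp
    rw [hcoef]
    set C : ℝ := mu * (lam * B) ^ k / ((Nat.factorial k : ℝ) * (4 * π * D) ^ ((n : ℝ) / 2))
      with hC
    have hCpos : 0 < C := div_pos (by positivity) (mul_pos hfac hP)
    set I1 : ℝ := ∫ s in Set.Ioi (0:ℝ),
      s ^ ((k:ℝ) - (n:ℝ)/2) * Real.exp (-lam * s - z ^ 2 / (4 * lam * s)) with hI1
    set I2 : ℝ := ∫ s in Set.Ioi (0:ℝ),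
      s ^ (((k:ℝ) - (n:ℝ)/2) + 1) * Real.exp (-lam * s - z ^ 2 / (4 * lam * s)) with hI2
    have hk1 : ((k:ℝ) + 1) ≠ 0 := by positivity
    calc B * z * (C * I1) = (B * C) * (z * I1) := by ring
      _ < (B * C) * (2 * lam * I2) := by
          exact mul_lt_mul_of_pos_left key (by positivity)
      _ = 2 * ((k:ℝ) + 1) * (C * (lam * B / ((k:ℝ) + 1)) * I2) := by
          field_simp
  refine ⟨?_, main⟩
  rw [genRatio, div_lt_div_iff₀ hA2pos (by positivity : (0:ℝ) < B * z)]
  nlinarith [main]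
end
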